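/- In any execution of the greedy bottom-up triplet-forming procedure on a tree T rooted at a degree-1 node with maximum degree 3, the number of triplets formed is at most ⌊t/2⌋, where t is the number of nodes of T. -/
import Mathlib


open scoped Classical

namespace ArtGallery

noncomputable section

/-- Node colors used by the greedy bottom-up triplet-forming procedure. -/
inductive TColor
  | red | orange | green
deriving DecidableEq

/-- A finite rooted tree of maximum degree 3 whose root has degree 1, together with its
parent and depth (level) functions. -/
structure RootedTree (V : Type) [Fintype V] where
  G : SimpleGraph V
  isTree : G.IsTree
  root : V
  parent : V → V
  parent_root : parent root = root
  parent_adj : ∀ v, v ≠ root → G.Adj v (parent v)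
  depth : V → ℕ
  depth_root : depth root = 0
  depth_parent : ∀ v, v ≠ root → depth (parent v) + 1 = depth v
  maxDeg : ∀ v, (G.neighborSet v).ncard ≤ 3
  root_deg : (G.neighborSet root).ncard = 1

/-- A state of the procedure: a coloring of the nodes and the set of triplets formed so far. -/
structure TState (V : Type) where
  color : V → TColor
  trips : Set (Set V)

variable {V : Type} [Fintype V]

/-- The initial state: all leaves orange, all other nodes red, no triplets formed. -/
def initState (T : RootedTree V) : TState V :=
  ⟨fun v => if v ≠ T.root ∧ (T.G.neighborSet v).ncard = 1 then TColor.orange else TColor.red, ∅⟩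

/-- One step of the greedy bottom-up triplet-forming procedure.  Orange nodes are processed
from the deepest level upwards (down to level 2): either two orange siblings are merged with
their parent (which becomes orange, the siblings green), or a lone orange node is merged with
its parent and grandparent (the grandparent becomes orange, the other two green). -/
inductive TStep (T : RootedTree V) : TState V → TState V → Prop
  | pair (s : TState V) (v v' : V)
      (hv : s.color v = TColor.orange) (hv' : s.color v' = TColor.orange)
      (hne : v ≠ v') (hp : T.parent v = T.parent v')
      (hdeep : ∀ w, s.color w = TColor.orange → T.depth w ≤ T.depth v)
      (hd : 2 ≤ T.depth v) :
      TStep T s ⟨fun w => if w = v ∨ w = v' then TColor.green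
                  else if w = T.parent v then TColor.orange else s.color w,
        insert {v, v', T.parent v} s.trips⟩
  | chain (s : TState V) (v : V)
      (hv : s.color v = TColor.orange)
      (hsolo : ∀ v', v' ≠ v → T.parent v' = T.parent v → s.color v' ≠ TColor.orange)
      (hdeep : ∀ w, s.color w = TColor.orange → T.depth w ≤ T.depth v)
      (hd : 2 ≤ T.depth v) :
      TStep T s ⟨fun w => if w = v ∨ w = T.parent v then TColor.green
                  else if w = T.parent (T.parent v) then TColor.orange else s.color w,
        insert {v, T.parent v, T.parent (T.parent v)} s.trips⟩

/-- The procedure has finished its main loop: no orange node at level `≥ 2` remains. -/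
def Terminal (T : RootedTree V) (s : TState V) : Prop :=
  ∀ v, s.color v = TColor.orange → T.depth v < 2

/-- The final family of triplets: if the root is already covered, the triplets formed so far;
otherwise one additional triplet consisting of the root, its child and a grandchild. -/
def FinalTrips (T : RootedTree V) (s : TState V) (F : Set (Set V)) : Prop :=
  ((∃ t ∈ s.trips, T.root ∈ t) ∧ F = s.trips) ∨
  ((∀ t ∈ s.trips, T.root ∉ t) ∧
    ∃ c g : V, c ≠ T.root ∧ T.parent c = T.root ∧ g ≠ c ∧ T.parent g = c ∧
      F = insert {T.root, c, g} s.trips)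

namespace RootedTree

lemma depth_parent_lt (T : RootedTree V) (v : V) (h : v ≠ T.root) :
    T.depth (T.parent v) < T.depth v := by
  have := T.depth_parent v h; omega

def walkToRoot (T : RootedTree V) : (v : V) → T.G.Walk v T.root
  | v =>
    if h : v = T.root then (SimpleGraph.Walk.nil).copy h.symm rfl
    else SimpleGraph.Walk.cons (T.parent_adj v h) (T.walkToRoot (T.parent v))
  termination_by v => T.depth v
  decreasing_by exact T.depth_parent_lt _ ‹_›

lemma length_walkToRoot (T : RootedTree V) (v : V) :
    (T.walkToRoot v).length = T.depth v := by
  rw [walkToRoot]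
  split
  · next h => subst h; simp [T.depth_root]
  · next h =>
    rw [SimpleGraph.Walk.length_cons, T.length_walkToRoot (T.parent v), T.depth_parent v h]
  termination_by T.depth v
  decreasing_by exact T.depth_parent_lt _ ‹_›

lemma depth_le_of_mem_support (T : RootedTree V) {u : V} (v : V)
    (h : u ∈ (T.walkToRoot v).support) : T.depth u ≤ T.depth v := by
  rw [walkToRoot] at h
  split at h
  · next hr =>
    subst hr
    simp [SimpleGraph.Walk.support_copy] at h
    subst h; rfl
  · next hr =>
    rw [SimpleGraph.Walk.support_cons] at h
    rcases List.mem_cons.1 h with h | h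
    · subst h; rfl
    · have := T.depth_le_of_mem_support (T.parent v) h
      have := T.depth_parent v hr
      omega
  termination_by T.depth v
  decreasing_by exact T.depth_parent_lt _ ‹_›

lemma isPath_walkToRoot (T : RootedTree V) (v : V) : (T.walkToRoot v).IsPath := by
  rw [walkToRoot]
  split
  · next h => simp [SimpleGraph.Walk.isPath_copy]
  · next h =>
    refine (T.isPath_walkToRoot (T.parent v)).cons ?_
    intro hmem
    have := T.depth_le_of_mem_support (T.parent v) hmem
    have := T.depth_parent v h
    omega
  termination_by T.depth v
  decreasing_by exact T.depth_parent_lt _ ‹_›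

lemma edges_walkToRoot (T : RootedTree V) (v : V) {e : Sym2 V}
    (h : e ∈ (T.walkToRoot v).edges) : ∃ u, u ≠ T.root ∧ e = s(u, T.parent u) := by
  rw [walkToRoot] at h
  split at h
  · next hr => simp [SimpleGraph.Walk.edges_copy] at h
  · next hr =>
    rw [SimpleGraph.Walk.edges_cons] at h
    rcases List.mem_cons.1 h with h | h
    · exact ⟨v, hr, h⟩
    · exact T.edges_walkToRoot (T.parent v) h
  termination_by T.depth v
  decreasing_by exact T.depth_parent_lt _ ‹_›

lemma support_walkToRoot_cons (T : RootedTree V) (v : V) (h : v ≠ T.root) :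
    (T.walkToRoot v).support = v :: (T.walkToRoot (T.parent v)).support := by
  conv_lhs => rw [walkToRoot]
  rw [dif_neg h, SimpleGraph.Walk.support_cons]

lemma depth_lt_card (T : RootedTree V) (v : V) : T.depth v < Fintype.card V := by
  have h1 := T.length_walkToRoot v
  have h2 := (T.isPath_walkToRoot v).support_nodup.length_le_card
  rw [SimpleGraph.Walk.length_support] at h2
  omega

lemma eq_root_of_depth_eq_zero (T : RootedTree V) {v : V} (h : T.depth v = 0) :
    v = T.root := by
  by_contra hc
  have := T.depth_parent v hc
  omega

lemma adj_parent (T : RootedTree V) {v w : V} (h : T.G.Adj v w) :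
    T.parent w = v ∨ T.parent v = w := by
  by_contra hc
  push_neg at hc
  obtain ⟨h1, h2⟩ := hc
  by_cases hw : w ∈ (T.walkToRoot v).support
  · have hq : ((T.walkToRoot v).takeUntil w hw).IsPath :=
      (T.isPath_walkToRoot v).takeUntil hw
    have hcyc : (SimpleGraph.Walk.cons h.symm ((T.walkToRoot v).takeUntil w hw)).IsCycle := by
      rw [SimpleGraph.Walk.cons_isCycle_iff]
      refine ⟨hq, ?_⟩
      intro he
      have hee := SimpleGraph.Walk.edges_takeUntil_subset (T.walkToRoot v) hw he
      obtain ⟨u, hu, he'⟩ := T.edges_walkToRoot v hee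
      rw [Sym2.eq_iff] at he'
      rcases he' with ⟨rfl, rfl⟩ | ⟨hwp, rfl⟩
      · exact h1 rfl
      · exact h2 hwp.symm
    exact T.isTree.IsAcyclic _ hcyc
  · have hP2 : (SimpleGraph.Walk.cons h.symm (T.walkToRoot v)).IsPath :=
      (T.isPath_walkToRoot v).cons hw
    obtain ⟨p, _, hup⟩ := T.isTree.existsUnique_path w T.root
    have heq : SimpleGraph.Walk.cons h.symm (T.walkToRoot v) = T.walkToRoot w := by
      rw [hup _ hP2, hup _ (T.isPath_walkToRoot w)]
    have hwr : w ≠ T.root := by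
      intro hr
      subst hr
      have := congrArg SimpleGraph.Walk.length heq
      rw [SimpleGraph.Walk.length_cons, T.length_walkToRoot, T.length_walkToRoot,
        T.depth_root] at this
      omega
    have hs := congrArg SimpleGraph.Walk.support heq
    rw [T.support_walkToRoot_cons w hwr, SimpleGraph.Walk.support_cons] at hs
    have hts : (T.walkToRoot v).support = (T.walkToRoot (T.parent w)).support :=
      List.tail_eq_of_cons_eq hs
    rw [SimpleGraph.Walk.support_eq_cons (T.walkToRoot v),
      SimpleGraph.Walk.support_eq_cons (T.walkToRoot (T.parent w))] at hts
    exact h1 (List.head_eq_of_cons_eq hts).symm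

lemma exists_child (T : RootedTree V) (x : V) (hx : x ≠ T.root)
    (hdeg : (T.G.neighborSet x).ncard ≠ 1) :
    ∃ w, T.parent w = x ∧ w ≠ T.root ∧ T.depth w = T.depth x + 1 := by
  have hmem : T.parent x ∈ T.G.neighborSet x := T.parent_adj x hx
  have h1 : 0 < (T.G.neighborSet x).ncard :=
    (Set.ncard_pos (Set.toFinite _)).mpr ⟨_, hmem⟩
  have h2 : 1 < (T.G.neighborSet x).ncard := by omega
  obtain ⟨w, hwmem, hwne⟩ := Set.exists_ne_of_one_lt_ncard h2 (T.parent x)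
  have hadj : T.G.Adj x w := hwmem
  have hpw : T.parent w = x := (T.adj_parent hadj).resolve_right fun h => hwne h.symm
  have hwr : w ≠ T.root := by
    intro h; subst h; rw [T.parent_root] at hpw; exact hx hpw.symm
  refine ⟨w, hpw, hwr, ?_⟩
  have := T.depth_parent w hwr
  rw [hpw] at this
  omega

end RootedTree


def Inv (T : RootedTree V) (s : TState V) : Prop :=
  (∀ x, s.color x = TColor.red → x = T.root ∨ (T.G.neighborSet x).ncard ≠ 1) ∧
  (∀ x, s.color x = TColor.green → s.color (T.parent x) ≠ TColor.red) ∧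
  (∀ x, s.color (T.parent x) = TColor.green → s.color x = TColor.green) ∧
  (∀ x, s.color x = TColor.green → 1 ≤ T.depth x) ∧
  ((∀ t ∈ s.trips, T.root ∉ t) → ∀ x, s.color x = TColor.green → 2 ≤ T.depth x) ∧
  2 * s.trips.ncard ≤ {x | s.color x = TColor.green}.ncard

lemma red_bound {T : RootedTree V} {s : TState V}
    (hM : ∀ x, s.color x = TColor.red → x = T.root ∨ (T.G.neighborSet x).ncard ≠ 1)
    (hL : ∀ x, s.color x = TColor.green → s.color (T.parent x) ≠ TColor.red)
    {D : ℕ} (hD : 1 ≤ D) (hb : ∀ o, s.color o = TColor.orange → T.depth o ≤ D) :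
    ∀ y, s.color y = TColor.red → T.depth y < D := by
  by_contra hc
  push_neg at hc
  obtain ⟨y, hy, hyD⟩ := hc
  have key : ∀ n : ℕ, ∃ z, s.color z = TColor.red ∧ D + n ≤ T.depth z := by
    intro n
    induction n with
    | zero => exact ⟨y, hy, by omega⟩
    | succ n ih =>
      obtain ⟨z, hz, hzD⟩ := ih
      have hzr : z ≠ T.root := by
        intro h; subst h; rw [T.depth_root] at hzD; omega
      obtain ⟨w, hpw, hwr, hwd⟩ := T.exists_child z hzr ((hM z hz).resolve_left hzr)
      have hwo : s.color w ≠ TColor.orange := by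
        intro h; have := hb w h; omega
      have hwg : s.color w ≠ TColor.green := by
        intro h; exact hL w h (by rw [hpw]; exact hz)
      have hwred : s.color w = TColor.red := by
        cases hcw : s.color w with
        | red => rfl
        | orange => exact absurd hcw hwo
        | green => exact absurd hcw hwg
      exact ⟨w, hwred, by omega⟩
  obtain ⟨z, _, hzD⟩ := key (Fintype.card V)
  have := T.depth_lt_card z
  omega

lemma inv_init (T : RootedTree V) : Inv T (initState T) := by
  have hng : ∀ x, (initState T).color x ≠ TColor.green := by
    intro x
    show (if _ then _ else _) ≠ _
    split <;> simp
  refine ⟨?_, ?_, ?_, ?_, ?_, ?_⟩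
  · intro x hx
    by_contra hc
    push_neg at hc
    have : (initState T).color x = TColor.orange := by
      show (if _ then _ else _) = _
      rw [if_pos ⟨hc.1, hc.2⟩]
    rw [this] at hx
    cases hx
  · intro x hx; exact absurd hx (hng x)
  · intro x hx; exact absurd hx (hng (T.parent x))
  · intro x hx; exact absurd hx (hng x)
  · intro _ x hx; exact absurd hx (hng x)
  · show 2 * (∅ : Set (Set V)).ncard ≤ _
    simp

lemma inv_step {T : RootedTree V} {s s' : TState V} (hstep : TStep T s s') (hI : Inv T s) :
    Inv T s' := by
  obtain ⟨hM, hL, hJ, hb1, hb2, hcount⟩ := hI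
  cases hstep with
  | pair v v' hv hv' hne hp hdeep hd =>
    have hvr : v ≠ T.root := fun h => by rw [h, T.depth_root] at hd; omega
    have hdp : T.depth (T.parent v) + 1 = T.depth v := T.depth_parent v hvr
    have hpr : T.parent v ≠ T.root := fun h => by rw [h, T.depth_root] at hdp; omega
    have hv'r : v' ≠ T.root := fun h => hpr (by rw [hp, h, T.parent_root])
    have hdv' : T.depth v' = T.depth v := by
      have := T.depth_parent v' hv'r; rw [← hp] at this; omega
    have hpv : T.parent v ≠ v := fun h => by rw [h] at hdp; omega
    have hpv' : T.parent v ≠ v' := fun h => by rw [h] at hdp; omega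
    have hpg : s.color (T.parent v) ≠ TColor.green := fun h => by
      have := hJ v h; simp [hv] at this
    have hredlt := red_bound hM hL (D := T.depth v) (by omega) hdeep
    have hchild : ∀ x, (T.parent x = v ∨ T.parent x = v') → s.color x = TColor.green := by
      intro x hx
      have hxr : x ≠ T.root := by
        intro h; subst h
        rcases hx with h | h <;> rw [T.parent_root] at h
        · exact hvr h.symm
        · exact hv'r h.symm
      have hdx : T.depth x = T.depth v + 1 := by
        have := T.depth_parent x hxr
        rcases hx with h | h <;> rw [h] at this <;> omega
      cases hcx : s.color x with
      | red => exact absurd (hredlt x hcx) (by omega)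
      | orange => exact absurd (hdeep x hcx) (by omega)
      | green => rfl
    have hgr : ∀ w, ((if w = v ∨ w = v' then TColor.green
        else if w = T.parent v then TColor.orange else s.color w) = TColor.green) ↔
        (s.color w = TColor.green ∨ (w = v ∨ w = v')) := by
      intro w
      by_cases h1 : w = v ∨ w = v'
      · rw [if_pos h1]; exact ⟨fun _ => Or.inr h1, fun _ => rfl⟩
      · rw [if_neg h1]
        by_cases h2 : w = T.parent v
        · subst h2
          rw [if_pos rfl]
          constructor
          · intro h; cases h
          · intro h
            rcases h with h | h
            · exact absurd h hpg
            · exact absurd h h1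
        · rw [if_neg h2]
          constructor
          · exact Or.inl
          · intro h
            rcases h with h | h
            · exact h
            · exact absurd h h1
    have key : ∀ y, s.color y ≠ TColor.red → (if y = v ∨ y = v' then TColor.green
        else if y = T.parent v then TColor.orange else s.color y) ≠ TColor.red := by
      intro y hy
      by_cases h1 : y = v ∨ y = v'
      · rw [if_pos h1]; simp
      · rw [if_neg h1]
        by_cases h2 : y = T.parent v
        · rw [if_pos h2]; simp
        · rw [if_neg h2]; exact hy
    refine ⟨?_, ?_, ?_, ?_, ?_, ?_⟩
    · intro x hx
      dsimp only at hx
      by_cases h1 : x = v ∨ x = v'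
      · rw [if_pos h1] at hx; cases hx
      · rw [if_neg h1] at hx
        by_cases h2 : x = T.parent v
        · rw [if_pos h2] at hx; cases hx
        · rw [if_neg h2] at hx; exact hM x hx
    · intro x hx
      dsimp only at hx ⊢
      rw [hgr x] at hx
      have hnp : ¬(T.parent v = v ∨ T.parent v = v') := by
        push_neg; exact ⟨hpv, hpv'⟩
      rcases hx with hx | hx | hx
      · exact key _ (hL x hx)
      · subst hx
        rw [if_neg hnp, if_pos rfl]; simp
      · subst hx
        rw [← hp, if_neg hnp, if_pos rfl]; simp
    · intro x hx
      dsimp only at hx ⊢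
      rw [hgr] at hx
      rw [hgr]
      rcases hx with hx | hx | hx
      · exact Or.inl (hJ x hx)
      · exact Or.inl (hchild x (Or.inl hx))
      · exact Or.inl (hchild x (Or.inr hx))
    · intro x hx
      dsimp only at hx
      rw [hgr] at hx
      rcases hx with hx | hx | hx
      · exact hb1 x hx
      · subst hx; omega
      · subst hx; omega
    · intro hroot x hx
      dsimp only at hroot hx
      have hroot' : ∀ t ∈ s.trips, T.root ∉ t := fun t ht =>
        hroot t (Set.mem_insert_of_mem _ ht)
      rw [hgr] at hx
      rcases hx with hx | hx | hx
      · exact hb2 hroot' x hx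
      · subst hx; exact hd
      · subst hx; omega
    · dsimp only
      have hset : {x | (if x = v ∨ x = v' then TColor.green
          else if x = T.parent v then TColor.orange else s.color x) = TColor.green}
          = insert v (insert v' {x | s.color x = TColor.green}) := by
        ext x
        rw [Set.mem_setOf_eq, hgr x]
        simp only [Set.mem_insert_iff, Set.mem_setOf_eq]
        tauto
      rw [hset]
      have hvn : v ∉ insert v' {x | s.color x = TColor.green} := by
        simp only [Set.mem_insert_iff, Set.mem_setOf_eq]
        push_neg
        exact ⟨hne, by rw [hv]; simp⟩
      have hv'n : v' ∉ {x | s.color x = TColor.green} := by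
        simp only [Set.mem_setOf_eq]; rw [hv']; simp
      rw [Set.ncard_insert_of_notMem hvn, Set.ncard_insert_of_notMem hv'n]
      have htr := Set.ncard_insert_le ({v, v', T.parent v} : Set V) s.trips
      omega
  | chain v hv hsolo hdeep hd =>
    have hvr : v ≠ T.root := fun h => by rw [h, T.depth_root] at hd; omega
    have hdp : T.depth (T.parent v) + 1 = T.depth v := T.depth_parent v hvr
    have hpr : T.parent v ≠ T.root := fun h => by rw [h, T.depth_root] at hdp; omega
    have hdg : T.depth (T.parent (T.parent v)) + 1 = T.depth (T.parent v) :=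
      T.depth_parent _ hpr
    have hpv : T.parent v ≠ v := fun h => by rw [h] at hdp; omega
    have hgv : T.parent (T.parent v) ≠ v := fun h => by rw [h] at hdg; omega
    have hgp : T.parent (T.parent v) ≠ T.parent v := fun h => by rw [h] at hdg; omega
    have hpg : s.color (T.parent v) ≠ TColor.green := fun h => by
      have := hJ v h; simp [hv] at this
    have hgg : s.color (T.parent (T.parent v)) ≠ TColor.green := fun h =>
      hpg (hJ (T.parent v) h)
    have hredlt := red_bound hM hL (D := T.depth v) (by omega) hdeep
    have hchild : ∀ x, T.parent x = v → s.color x = TColor.green := by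
      intro x hx
      have hxr : x ≠ T.root := by
        intro h; subst h; rw [T.parent_root] at hx; exact hvr hx.symm
      have hdx : T.depth x = T.depth v + 1 := by
        have := T.depth_parent x hxr; rw [hx] at this; omega
      cases hcx : s.color x with
      | red => exact absurd (hredlt x hcx) (by omega)
      | orange => exact absurd (hdeep x hcx) (by omega)
      | green => rfl
    have hsib : ∀ x, x ≠ v → T.parent x = T.parent v → s.color x = TColor.green := by
      intro x hxv hx
      have hxr : x ≠ T.root := by
        intro h; subst h; rw [T.parent_root] at hx; exact hpr hx.symm
      have hdx : T.depth x = T.depth v := by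
        have := T.depth_parent x hxr; rw [hx] at this; omega
      cases hcx : s.color x with
      | red => exact absurd (hredlt x hcx) (by omega)
      | orange => exact absurd hcx (hsolo x hxv hx)
      | green => rfl
    have hgr : ∀ w, ((if w = v ∨ w = T.parent v then TColor.green
        else if w = T.parent (T.parent v) then TColor.orange else s.color w) = TColor.green) ↔
        (s.color w = TColor.green ∨ (w = v ∨ w = T.parent v)) := by
      intro w
      by_cases h1 : w = v ∨ w = T.parent v
      · rw [if_pos h1]; exact ⟨fun _ => Or.inr h1, fun _ => rfl⟩
      · rw [if_neg h1]
        by_cases h2 : w = T.parent (T.parent v)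
        · subst h2
          rw [if_pos rfl]
          constructor
          · intro h; cases h
          · intro h
            rcases h with h | h
            · exact absurd h hgg
            · exact absurd h h1
        · rw [if_neg h2]
          constructor
          · exact Or.inl
          · intro h
            rcases h with h | h
            · exact h
            · exact absurd h h1
    have key : ∀ y, s.color y ≠ TColor.red → (if y = v ∨ y = T.parent v then TColor.green
        else if y = T.parent (T.parent v) then TColor.orange else s.color y) ≠ TColor.red := by
      intro y hy
      by_cases h1 : y = v ∨ y = T.parent v
      · rw [if_pos h1]; simp
      · rw [if_neg h1]
        by_cases h2 : y = T.parent (T.parent v)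
        · rw [if_pos h2]; simp
        · rw [if_neg h2]; exact hy
    refine ⟨?_, ?_, ?_, ?_, ?_, ?_⟩
    · intro x hx
      dsimp only at hx
      by_cases h1 : x = v ∨ x = T.parent v
      · rw [if_pos h1] at hx; cases hx
      · rw [if_neg h1] at hx
        by_cases h2 : x = T.parent (T.parent v)
        · rw [if_pos h2] at hx; cases hx
        · rw [if_neg h2] at hx; exact hM x hx
    · intro x hx
      dsimp only at hx ⊢
      rw [hgr x] at hx
      rcases hx with hx | hx | hx
      · exact key _ (hL x hx)
      · subst hx
        rw [if_pos (Or.inr rfl)]; simp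
      · subst hx
        have hnp : ¬(T.parent (T.parent v) = v ∨ T.parent (T.parent v) = T.parent v) := by
          push_neg; exact ⟨hgv, hgp⟩
        rw [if_neg hnp, if_pos rfl]; simp
    · intro x hx
      dsimp only at hx ⊢
      rw [hgr] at hx
      rw [hgr]
      rcases hx with hx | hx | hx
      · exact Or.inl (hJ x hx)
      · exact Or.inl (hchild x hx)
      · by_cases hxv : x = v
        · exact Or.inr (Or.inl hxv)
        · exact Or.inl (hsib x hxv hx)
    · intro x hx
      dsimp only at hx
      rw [hgr] at hx
      rcases hx with hx | hx | hx
      · exact hb1 x hx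
      · subst hx; omega
      · subst hx; omega
    · intro hroot x hx
      dsimp only at hroot hx
      have hroot' : ∀ t ∈ s.trips, T.root ∉ t := fun t ht =>
        hroot t (Set.mem_insert_of_mem _ ht)
      have hgnr : T.parent (T.parent v) ≠ T.root := by
        intro h
        have hmem : T.root ∈ ({v, T.parent v, T.parent (T.parent v)} : Set V) := by
          rw [← h]; simp
        exact hroot _ (Set.mem_insert _ _) hmem
      have hdg0 : 1 ≤ T.depth (T.parent (T.parent v)) := by
        rcases Nat.eq_zero_or_pos (T.depth (T.parent (T.parent v))) with h | h
        · exact absurd (T.eq_root_of_depth_eq_zero h) hgnr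
        · omega
      rw [hgr] at hx
      rcases hx with hx | hx | hx
      · exact hb2 hroot' x hx
      · subst hx; exact hd
      · subst hx; omega
    · dsimp only
      have hset : {x | (if x = v ∨ x = T.parent v then TColor.green
          else if x = T.parent (T.parent v) then TColor.orange else s.color x) = TColor.green}
          = insert v (insert (T.parent v) {x | s.color x = TColor.green}) := by
        ext x
        rw [Set.mem_setOf_eq, hgr x]
        simp only [Set.mem_insert_iff, Set.mem_setOf_eq]
        tauto
      rw [hset]
      have hvn : v ∉ insert (T.parent v) {x | s.color x = TColor.green} := by
        simp only [Set.mem_insert_iff, Set.mem_setOf_eq]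
        push_neg
        exact ⟨fun h => hpv h.symm, by rw [hv]; simp⟩
      have hpn : T.parent v ∉ {x | s.color x = TColor.green} := hpg
      rw [Set.ncard_insert_of_notMem hvn, Set.ncard_insert_of_notMem hpn]
      have htr := Set.ncard_insert_le
        ({v, T.parent v, T.parent (T.parent v)} : Set V) s.trips
      omega

lemma inv_exec {T : RootedTree V} {s : TState V}
    (h : Relation.ReflTransGen (TStep T) (initState T) s) : Inv T s := by
  induction h with
  | refl => exact inv_init T
  | tail _ hstep ih => exact inv_step hstep ih

/-- In any execution of the greedy bottom-up triplet-forming procedure on a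
rooted tree `T` of maximum degree 3 with degree-1 root, the number of triplets formed is at
most `⌊t/2⌋`, where `t` is the number of nodes of `T`. -/
theorem greedy_triplets_card (T : RootedTree V) (hdepth : ∃ v, 2 ≤ T.depth v)
    (s : TState V) (hexec : Relation.ReflTransGen (TStep T) (initState T) s)
    (hterm : Terminal T s) (F : Set (Set V)) (hF : FinalTrips T s F) :
    F.ncard ≤ Fintype.card V / 2 := by
  obtain ⟨hM, hL, hJ, hb1, hb2, hcount⟩ := inv_exec hexec
  have hGle : {x | s.color x = TColor.green}.ncard ≤ Fintype.card V := by
    have h1 : {x | s.color x = TColor.green}.ncard ≤ (Set.univ : Set V).ncard :=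
      Set.ncard_le_ncard (Set.subset_univ _) (Set.toFinite _)
    rwa [Set.ncard_univ, Nat.card_eq_fintype_card] at h1
  rw [Nat.le_div_iff_mul_le (by norm_num : 0 < 2)]
  rcases hF with ⟨_, hFe⟩ | ⟨hroot, c, g, hcr, hpc, hgc, hpg2, hFe⟩
  · subst hFe; omega
  · have hg2 := hb2 hroot
    have hdc : T.depth c = 1 := by
      have := T.depth_parent c hcr; rw [hpc, T.depth_root] at this; omega
    have hrn : T.root ∉ insert c {x | s.color x = TColor.green} := by
      simp only [Set.mem_insert_iff, Set.mem_setOf_eq]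
      push_neg
      refine ⟨fun h => hcr h.symm, fun h => ?_⟩
      have := hg2 _ h; rw [T.depth_root] at this; omega
    have hcn : c ∉ {x | s.color x = TColor.green} := by
      intro h; have := hg2 _ h; omega
    have hcard : (insert T.root (insert c {x | s.color x = TColor.green})).ncard
        ≤ Fintype.card V := by
      have h1 := Set.ncard_le_ncard
        (Set.subset_univ (insert T.root (insert c {x | s.color x = TColor.green})))
        (Set.toFinite _)
      rwa [Set.ncard_univ, Nat.card_eq_fintype_card] at h1
    rw [Set.ncard_insert_of_notMem hrn, Set.ncard_insert_of_notMem hcn] at hcard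
    have hFle : F.ncard ≤ s.trips.ncard + 1 := by
      rw [hFe]; exact Set.ncard_insert_le _ _
    omega


end
end ArtGallery
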